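/- Let R = K[z_1, ..., z_r] be a polynomial ring over a field K with a term order <, and let I and J be homogeneous ideals of R. Then in_<(I + J) = in_<(I) + in_<(J) if and only if in_<(I ∩ J) = in_<(I) ∩ in_<(J). -/

import Mathlib

open MvPolynomial

noncomputable section

variable {K : Type} [Field K] {σ : Type}

/-- `p` is homogeneous of degree `z : ℤ` (the zero polynomial is homogeneous of any degree). -/
def IsHomZ (p : MvPolynomial σ K) (z : ℤ) : Prop :=
  ∀ d ∈ p.support, (d.sum fun _ e => (e : ℤ)) = z

/-- Homogeneous elements of degree `z` of the polynomial ring, as an additive subgroup. -/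
def polyGr (K : Type) [Field K] (σ : Type) (z : ℤ) :
    AddSubgroup (MvPolynomial σ K) where
  carrier := {p | IsHomZ p z}
  zero_mem' := by intro d hd; simp at hd
  add_mem' := by
    classical
    intro p q hp hq d hd
    rcases Finset.mem_union.mp (MvPolynomial.support_add hd) with h | h
    · exact hp d h
    · exact hq d h
  neg_mem' := by
    intro p hp d hd
    exact hp d (by simpa using hd)

/-- An element of a graded free module `B →₀ S`, with generator `b` in degree `dg b`,
is homogeneous of degree `z`. -/
def FinsuppHomog {B : Type} (dg : B → ℤ) (x : B →₀ MvPolynomial σ K) (z : ℤ) : Prop :=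
  ∀ b, IsHomZ (x b) (z - dg b)

/-- A graded free resolution of a module `M` over the polynomial ring,
with degree-`0` (i.e. graded) differentials; the grading of `M` is recorded by
the family of additive subgroups `gr`. -/
structure GradedFreeResolution {M : Type} [AddCommGroup M]
    [Module (MvPolynomial σ K) M] (gr : ℤ → AddSubgroup M) where
  B : ℕ → Type
  dg : ∀ i, B i → ℤ
  φ : ∀ i, (B (i + 1) →₀ MvPolynomial σ K) →ₗ[MvPolynomial σ K]
        (B i →₀ MvPolynomial σ K)
  π : (B 0 →₀ MvPolynomial σ K) →ₗ[MvPolynomial σ K] M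
  φ_graded : ∀ i b, FinsuppHomog (dg i) (φ i (Finsupp.single b 1)) (dg (i + 1) b)
  π_graded : ∀ b, π (Finsupp.single b 1) ∈ gr (dg 0 b)
  π_surj : Function.Surjective π
  exact0 : Function.Exact (φ 0) π
  exact : ∀ i, Function.Exact (φ (i + 1)) (φ i)

/-- Castelnuovo–Mumford regularity of a graded module, defined as the infimum over
all graded free resolutions of the largest twist: `reg M = min_F max {deg b - i}`;
the minimal free resolution realizes this infimum. -/
def moduleReg (K : Type) [Field K] (σ : Type) {M : Type} [AddCommGroup M]
    [Module (MvPolynomial σ K) M] (gr : ℤ → AddSubgroup M) : ℤ :=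
  sInf {r : ℤ | ∃ F : GradedFreeResolution (K := K) (σ := σ) gr,
    ∀ i b, F.dg i b ≤ r + i}

/-- Grading on (the underlying module of) a homogeneous ideal. -/
def idealGr (I : Ideal (MvPolynomial σ K)) (z : ℤ) : AddSubgroup I where
  carrier := {x | IsHomZ (x : MvPolynomial σ K) z}
  zero_mem' := by intro d hd; simp at hd
  add_mem' := by
    classical
    intro p q hp hq d hd
    rcases Finset.mem_union.mp (MvPolynomial.support_add hd) with h | h
    · exact hp d h
    · exact hq d h
  neg_mem' := by
    intro p hp d hd
    exact hp d (by simpa using hd)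

/-- Grading on the quotient `S/I` of the polynomial ring by a homogeneous ideal. -/
def quotGr (I : Ideal (MvPolynomial σ K)) (z : ℤ) :
    AddSubgroup (MvPolynomial σ K ⧸ I) :=
  (polyGr K σ z).map (Ideal.Quotient.mk I).toAddMonoidHom

/-- The Castelnuovo–Mumford regularity `reg I` of a homogeneous ideal. -/
def idealReg (I : Ideal (MvPolynomial σ K)) : ℤ :=
  moduleReg K σ (idealGr I)

/-- The Castelnuovo–Mumford regularity `reg S/I`. -/
def quotReg (I : Ideal (MvPolynomial σ K)) : ℤ :=
  moduleReg K σ (quotGr I)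

/-- The binomial edge ideal of a graph `G` on `[n]`, in
`S = K[x_1, …, x_n, y_1, …, y_n]` where `x_i = X (inl i)` and `y_i = X (inr i)`. -/
def beIdeal (K : Type) [Field K] {n : ℕ} (G : SimpleGraph (Fin n)) :
    Ideal (MvPolynomial (Fin n ⊕ Fin n) K) :=
  Ideal.span {f | ∃ i j, G.Adj i j ∧
    f = X (Sum.inl i) * X (Sum.inr j) - X (Sum.inl j) * X (Sum.inr i)}

/-- The initial ideal of `I` with respect to a monomial order `m`: the ideal generated
by the leading monomials of the nonzero elements of `I`. -/
def initialIdeal (m : MonomialOrder σ) (I : Ideal (MvPolynomial σ K)) :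
    Ideal (MvPolynomial σ K) :=
  Ideal.span {g | ∃ f ∈ I, ∃ d ∈ f.support,
    (∀ d' ∈ f.support, m.toSyn d' ≤ m.toSyn d) ∧ g = monomial d (1 : K)}

/-- A finite injective resolution `0 → M → I⁰ → I¹ → ⋯ → Iⁿ → 0`. -/
structure FiniteInjectiveResolution (R : Type) [CommRing R] (M : Type) [AddCommGroup M]
    [Module R M] where
  n : ℕ
  I : ℕ → Type
  acg : ∀ i, AddCommGroup (I i)
  mod : ∀ i, @Module R (I i) _ (acg i).toAddCommMonoid
  inj : ∀ i, @Module.Injective R _ (I i) (acg i) (mod i)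
  ι : @LinearMap R R _ _ (RingHom.id R) M (I 0) _ (acg 0).toAddCommMonoid _ (mod 0)
  d : ∀ i, @LinearMap R R _ _ (RingHom.id R) (I i) (I (i + 1))
        (acg i).toAddCommMonoid (acg (i + 1)).toAddCommMonoid (mod i) (mod (i + 1))
  ι_inj : Function.Injective ι
  ex0 : Function.Exact ι (d 0)
  ex : ∀ i, Function.Exact (d i) (d (i + 1))
  bounded : ∀ i > n, ∀ x : I i, x = 0

/-- A (finite-dimensional) Noetherian ring is Gorenstein iff it has finite injective
dimension over itself. -/
def IsGorensteinRing (R : Type) [CommRing R] : Prop :=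
  IsNoetherianRing R ∧ Nonempty (FiniteInjectiveResolution R R)

end

noncomputable section
variable {K : Type} [Field K] {σ : Type}

namespace Stmt10Aux

variable (m : MonomialOrder σ)

def IsLead (f : MvPolynomial σ K) (d : σ →₀ ℕ) : Prop :=
  d ∈ f.support ∧ ∀ d' ∈ f.support, m.toSyn d' ≤ m.toSyn d

def LeadSet (I : Ideal (MvPolynomial σ K)) : Set (σ →₀ ℕ) :=
  {d | ∃ f ∈ I, IsLead m f d}

lemma initialIdeal_eq (I : Ideal (MvPolynomial σ K)) :
    initialIdeal m I = Ideal.span ((fun d => monomial d (1 : K)) '' LeadSet m I) := by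
  unfold initialIdeal
  congr 1
  ext g
  constructor
  · rintro ⟨f, hf, d, hd, hmax, rfl⟩; exact ⟨d, ⟨f, hf, hd, hmax⟩, rfl⟩
  · rintro ⟨d, ⟨f, hf, hd, hmax⟩, rfl⟩; exact ⟨f, hf, d, hd, hmax, rfl⟩

lemma exists_isLead {f : MvPolynomial σ K} (hf : f ≠ 0) : ∃ d, IsLead m f d := by
  obtain ⟨d, hd, hmax⟩ := Finset.exists_max_image f.support m.toSyn
    (support_nonempty.mpr hf)
  exact ⟨d, hd, hmax⟩

lemma mem_span_mono_iff {D : Set (σ →₀ ℕ)} {e : σ →₀ ℕ} :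
    monomial e (1 : K) ∈ Ideal.span ((fun d => monomial d (1 : K)) '' D) ↔
      ∃ d ∈ D, d ≤ e := by
  classical
  rw [mem_ideal_span_monomial_image]
  constructor
  · intro h
    exact h e (mem_support_iff.mpr (by simp [coeff_monomial]))
  · rintro ⟨d, hd, hde⟩ xi hxi
    rw [support_monomial, if_neg one_ne_zero, Finset.mem_singleton] at hxi
    exact hxi ▸ ⟨d, hd, hde⟩

lemma leadSet_shift {I : Ideal (MvPolynomial σ K)} {d e : σ →₀ ℕ}
    (hd : d ∈ LeadSet m I) (hde : d ≤ e) : e ∈ LeadSet m I := by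
  classical
  obtain ⟨f, hfI, hsupp, hmax⟩ := hd
  set c := e - d with hc
  refine ⟨monomial c 1 * f, Ideal.mul_mem_left _ _ hfI, ?_, ?_⟩
  · rw [mem_support_iff] at hsupp ⊢
    have : e = c + d := by rw [hc, tsub_add_cancel_of_le hde]
    rw [this, coeff_monomial_mul, one_mul]
    exact hsupp
  · intro x hx
    obtain ⟨a, ha, b, hb, rfl⟩ := Finset.mem_add.mp (support_mul _ _ hx)
    rw [support_monomial, if_neg one_ne_zero, Finset.mem_singleton] at ha
    subst ha
    have : e = c + d := by rw [hc, tsub_add_cancel_of_le hde]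
    rw [this, map_add, map_add]
    exact add_le_add (le_refl _) (hmax b hb)

lemma monomial_mem_iff {I : Ideal (MvPolynomial σ K)} {e : σ →₀ ℕ} :
    monomial e (1 : K) ∈ initialIdeal m I ↔ ∃ f ∈ I, IsLead m f e := by
  rw [initialIdeal_eq, mem_span_mono_iff]
  constructor
  · rintro ⟨d, hd, hde⟩
    exact leadSet_shift m hd hde
  · intro h
    exact ⟨e, h, le_refl e⟩

lemma toSyn_lt_of_ne {x d : σ →₀ ℕ} (h : m.toSyn x ≤ m.toSyn d) (hne : x ≠ d) :
    m.toSyn x < m.toSyn d :=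
  lt_of_le_of_ne h (fun hh => hne (m.toSyn.injective hh))

/-- Subtracting a multiple of a lower-lead polynomial keeps the lead and lead coeff. -/
lemma isLead_sub_smul {f f' : MvPolynomial σ K} {d e : σ →₀ ℕ}
    (hf : IsLead m f d) (hf' : IsLead m f' e) (hlt : m.toSyn e < m.toSyn d) (c : K) :
    IsLead m (f - c • f') d ∧ coeff d (f - c • f') = coeff d f := by
  classical
  have hcd : coeff d f' = 0 := by
    by_contra h
    exact absurd (hf'.2 d (mem_support_iff.mpr h)) (not_le.mpr hlt)
  have hco : coeff d (f - c • f') = coeff d f := by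
    rw [coeff_sub, coeff_smul, hcd, smul_zero, sub_zero]
  refine ⟨⟨?_, ?_⟩, hco⟩
  · rw [mem_support_iff, hco]
    exact mem_support_iff.mp hf.1
  · intro x hx
    rcases Finset.mem_union.mp (support_sub σ _ _ hx) with h | h
    · exact hf.2 x h
    · exact le_of_lt (lt_of_le_of_lt (hf'.2 x (support_smul h)) hlt)

/-- The key cancellation step: subtracting the right multiple strictly lowers the lead. -/
lemma step {h f' : MvPolynomial σ K} {e : σ →₀ ℕ}
    (hh : IsLead m h e) (hf' : IsLead m f' e) :
    ∀ x ∈ (h - (coeff e h / coeff e f') • f').support, m.toSyn x < m.toSyn e := by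
  classical
  intro x hx
  have hcf' : coeff e f' ≠ 0 := mem_support_iff.mp hf'.1
  have hzero : coeff e (h - (coeff e h / coeff e f') • f') = 0 := by
    rw [coeff_sub, coeff_smul, smul_eq_mul, div_mul_cancel₀ _ hcf', sub_self]
  have hxe : x ≠ e := by
    intro hcontra
    rw [mem_support_iff, hcontra, hzero] at hx
    exact hx rfl
  have hle : m.toSyn x ≤ m.toSyn e := by
    rcases Finset.mem_union.mp (support_sub σ _ _ hx) with h1 | h1
    · exact hh.2 x h1
    · exact hf'.2 x (support_smul h1)
  exact toSyn_lt_of_ne m hle hxe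


lemma smul_mem' {I : Ideal (MvPolynomial σ K)} (c : K) {f : MvPolynomial σ K}
    (h : f ∈ I) : c • f ∈ I := by
  rw [smul_eq_C_mul]
  exact I.mul_mem_left _ h

lemma initialIdeal_mono {I J : Ideal (MvPolynomial σ K)} (h : I ≤ J) :
    initialIdeal m I ≤ initialIdeal m J := by
  apply Ideal.span_mono
  rintro g ⟨f, hf, d, hd, hm, rfl⟩
  exact ⟨f, h hf, d, hd, hm, rfl⟩

lemma key1 {I J : Ideal (MvPolynomial σ K)}
    (H : initialIdeal m (I + J) = initialIdeal m I + initialIdeal m J)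
    (s : m.syn) :
    ∀ f g (d : σ →₀ ℕ), f ∈ I → g ∈ J → IsLead m f d → IsLead m g d →
      coeff d f = coeff d g → (∀ x ∈ (f - g).support, m.toSyn x ≤ s) →
      ∃ p, p ∈ I ⊓ J ∧ IsLead m p d := by
  classical
  induction s using WellFoundedLT.induction with
  | _ s IH =>
  intro f g d hfI hgJ hf hg hco hbound
  by_cases hfg : f - g = 0
  · have hfeq : f = g := sub_eq_zero.mp hfg
    exact ⟨f, Submodule.mem_inf.mpr ⟨hfI, hfeq ▸ hgJ⟩, hf⟩
  · obtain ⟨e, he⟩ := exists_isLead m hfg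
    have hed : m.toSyn e < m.toSyn d := by
      have hle : m.toSyn e ≤ m.toSyn d := by
        rcases Finset.mem_union.mp (support_sub σ _ _ he.1) with h1 | h1
        · exact hf.2 e h1
        · exact hg.2 e h1
      refine toSyn_lt_of_ne m hle ?_
      intro hcontra
      exact (mem_support_iff.mp he.1) (by rw [hcontra, coeff_sub, hco, sub_self])
    have hmemfg : f - g ∈ I + J := by
      rw [Ideal.add_eq_sup]
      exact sub_mem (Ideal.mem_sup_left hfI) (Ideal.mem_sup_right hgJ)
    have hmono : monomial e (1 : K) ∈ initialIdeal m (I + J) :=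
      (monomial_mem_iff m).mpr ⟨f - g, hmemfg, he⟩
    rw [H] at hmono
    have hsum : initialIdeal m I + initialIdeal m J =
        Ideal.span ((fun d => monomial d (1 : K)) '' (LeadSet m I ∪ LeadSet m J)) := by
      rw [initialIdeal_eq, initialIdeal_eq, Set.image_union, Ideal.span_union,
        Ideal.add_eq_sup]
    rw [hsum] at hmono
    obtain ⟨d', hd', hde⟩ := mem_span_mono_iff.mp hmono
    have he' : e ∈ LeadSet m I ∪ LeadSet m J := by
      rcases hd' with h1 | h1
      · exact Or.inl (leadSet_shift m h1 hde)
      · exact Or.inr (leadSet_shift m h1 hde)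
    rcases he' with ⟨f', hf'I, hlf'⟩ | ⟨f', hf'J, hlf'⟩
    · -- reduce f
      set c : K := coeff e (f - g) / coeff e f' with hcdef
      have hstep := step m he hlf'
      obtain ⟨hl2, hc2⟩ := isLead_sub_smul m hf hlf' hed c
      have hf2I : f - c • f' ∈ I := sub_mem hfI (smul_mem' c hf'I)
      have heq : (f - c • f') - g = (f - g) - c • f' := by ring
      by_cases h2 : (f - c • f') - g = 0
      · have hfeq : f - c • f' = g := sub_eq_zero.mp h2
        exact ⟨f - c • f', Submodule.mem_inf.mpr ⟨hf2I, hfeq ▸ hgJ⟩, hl2⟩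
      · obtain ⟨e₂, he₂⟩ := exists_isLead m h2
        have hlt2 : m.toSyn e₂ < m.toSyn e := hstep e₂ (heq ▸ he₂.1)
        have hs : m.toSyn e₂ < s := lt_of_lt_of_le hlt2 (hbound e he.1)
        exact IH _ hs (f - c • f') g d hf2I hgJ hl2 hg (hc2.trans hco) he₂.2
    · -- reduce g
      set c : K := coeff e (f - g) / coeff e f' with hcdef
      have hstep := step m he hlf'
      have hrw : g + c • f' = g - (-c) • f' := by rw [neg_smul, sub_neg_eq_add]
      obtain ⟨hl2, hc2⟩ := isLead_sub_smul m hg hlf' hed (-c)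
      rw [← hrw] at hl2 hc2
      have hg2J : g + c • f' ∈ J := add_mem hgJ (smul_mem' c hf'J)
      have heq : f - (g + c • f') = (f - g) - c • f' := by ring
      by_cases h2 : f - (g + c • f') = 0
      · have hfeq : f = g + c • f' := sub_eq_zero.mp h2
        exact ⟨f, Submodule.mem_inf.mpr ⟨hfI, hfeq ▸ hg2J⟩, hf⟩
      · obtain ⟨e₂, he₂⟩ := exists_isLead m h2
        have hlt2 : m.toSyn e₂ < m.toSyn e := hstep e₂ (heq ▸ he₂.1)
        have hs : m.toSyn e₂ < s := lt_of_lt_of_le hlt2 (hbound e he.1)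
        exact IH _ hs f (g + c • f') d hfI hg2J hf hl2 (hco.trans hc2.symm) he₂.2

lemma dir1 {I J : Ideal (MvPolynomial σ K)}
    (H : initialIdeal m (I + J) = initialIdeal m I + initialIdeal m J) :
    initialIdeal m (I ⊓ J) = initialIdeal m I ⊓ initialIdeal m J := by
  refine le_antisymm
    (le_inf (initialIdeal_mono m inf_le_left) (initialIdeal_mono m inf_le_right)) ?_
  intro p hp
  rw [Submodule.mem_inf, initialIdeal_eq, initialIdeal_eq] at hp
  rw [initialIdeal_eq, mem_ideal_span_monomial_image]
  intro xi hxi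
  obtain ⟨d1, hd1, hle1⟩ := (mem_ideal_span_monomial_image.mp hp.1) xi hxi
  obtain ⟨d2, hd2, hle2⟩ := (mem_ideal_span_monomial_image.mp hp.2) xi hxi
  obtain ⟨f, hfI, hlf⟩ := leadSet_shift m hd1 hle1
  obtain ⟨g, hgJ, hlg⟩ := leadSet_shift m hd2 hle2
  have hcg : coeff xi g ≠ 0 := mem_support_iff.mp hlg.1
  set a : K := coeff xi f / coeff xi g with hadef
  have ha : a ≠ 0 := div_ne_zero (mem_support_iff.mp hlf.1) hcg
  have hg' : IsLead m (a • g) xi := by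
    constructor
    · rw [mem_support_iff, coeff_smul, smul_eq_mul]
      exact mul_ne_zero ha hcg
    · intro x hx
      exact hlg.2 x (support_smul hx)
  have hco : coeff xi f = coeff xi (a • g) := by
    rw [coeff_smul, smul_eq_mul, hadef, div_mul_cancel₀ _ hcg]
  obtain ⟨p', hp', hlp'⟩ := key1 m H ((f - a • g).support.sup m.toSyn) f (a • g) xi hfI
    (smul_mem' a hgJ) hlf hg' hco (fun x hx => Finset.le_sup hx)
  exact ⟨xi, ⟨p', hp', hlp'⟩, le_refl xi⟩


lemma key2 {I J : Ideal (MvPolynomial σ K)}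
    (H : initialIdeal m (I ⊓ J) = initialIdeal m I ⊓ initialIdeal m J)
    (s : m.syn) :
    ∀ f g (d : σ →₀ ℕ), f ∈ I → g ∈ J → IsLead m (f + g) d →
      (∀ x ∈ f.support, m.toSyn x ≤ s) → (∀ x ∈ g.support, m.toSyn x ≤ s) →
      monomial d (1 : K) ∈ initialIdeal m I + initialIdeal m J := by
  classical
  induction s using WellFoundedLT.induction with
  | _ s IH =>
  intro f g d hfI hgJ hlead hbf hbg
  by_cases hcase : ∀ x ∈ f.support ∪ g.support, m.toSyn x ≤ m.toSyn d
  · have hd : coeff d f ≠ 0 ∨ coeff d g ≠ 0 := by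
      by_contra hcon
      push_neg at hcon
      have : coeff d (f + g) = 0 := by rw [coeff_add, hcon.1, hcon.2, add_zero]
      exact (mem_support_iff.mp hlead.1) this
    rw [Ideal.add_eq_sup]
    rcases hd with h1 | h1
    · refine Ideal.mem_sup_left ((monomial_mem_iff m).mpr ⟨f, hfI, mem_support_iff.mpr h1,
        fun x hx => hcase x (Finset.mem_union_left _ hx)⟩)
    · refine Ideal.mem_sup_right ((monomial_mem_iff m).mpr ⟨g, hgJ, mem_support_iff.mpr h1,
        fun x hx => hcase x (Finset.mem_union_right _ hx)⟩)
  · push_neg at hcase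
    obtain ⟨x₀, hx₀, hgt⟩ := hcase
    obtain ⟨u, hu, humax⟩ := Finset.exists_max_image (f.support ∪ g.support) m.toSyn ⟨x₀, hx₀⟩
    have hdu : m.toSyn d < m.toSyn u := lt_of_lt_of_le hgt (humax x₀ hx₀)
    have hcoeffu : coeff u (f + g) = 0 := by
      by_contra hcon
      exact absurd (hlead.2 u (mem_support_iff.mpr hcon)) (not_le.mpr hdu)
    have hgu : coeff u g = -coeff u f := by
      have h0 : coeff u f + coeff u g = 0 := by rw [← coeff_add]; exact hcoeffu
      exact eq_neg_of_add_eq_zero_left (by rw [add_comm]; exact h0)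
    have hcf : coeff u f ≠ 0 := by
      intro hzero
      have hgz : coeff u g = 0 := by rw [hgu, hzero, neg_zero]
      rcases Finset.mem_union.mp hu with h1 | h1
      · exact (mem_support_iff.mp h1) hzero
      · exact (mem_support_iff.mp h1) hgz
    have hcg : coeff u g ≠ 0 := by
      rw [hgu]
      exact neg_ne_zero.mpr hcf
    have hluf : IsLead m f u :=
      ⟨mem_support_iff.mpr hcf, fun x hx => humax x (Finset.mem_union_left _ hx)⟩
    have hlug : IsLead m g u :=
      ⟨mem_support_iff.mpr hcg, fun x hx => humax x (Finset.mem_union_right _ hx)⟩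
    have hmono : monomial u (1 : K) ∈ initialIdeal m (I ⊓ J) := by
      rw [H, Submodule.mem_inf]
      exact ⟨(monomial_mem_iff m).mpr ⟨f, hfI, hluf⟩, (monomial_mem_iff m).mpr ⟨g, hgJ, hlug⟩⟩
    obtain ⟨p, hpIJ, hlp⟩ := (monomial_mem_iff m).mp hmono
    have hcp : coeff u p ≠ 0 := mem_support_iff.mp hlp.1
    set c : K := coeff u f / coeff u p with hcdef
    have hf2I : f - c • p ∈ I := sub_mem hfI (smul_mem' c (Submodule.mem_inf.mp hpIJ).1)
    have hg2J : g + c • p ∈ J := add_mem hgJ (smul_mem' c (Submodule.mem_inf.mp hpIJ).2)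
    have hstepf : ∀ x ∈ (f - c • p).support, m.toSyn x < m.toSyn u := step m hluf hlp
    have hg2rw : g + c • p = g - (coeff u g / coeff u p) • p := by
      rw [hgu, neg_div, neg_smul, sub_neg_eq_add]
    have hstepg : ∀ x ∈ (g + c • p).support, m.toSyn x < m.toSyn u := by
      rw [hg2rw]
      exact step m hlug hlp
    have hsum : (f - c • p) + (g + c • p) = f + g := by ring
    have hne : f + g ≠ 0 := by
      intro hz
      rw [hz] at hlead
      exact absurd hlead.1 (by simp)
    have hunion : ((f - c • p).support ∪ (g + c • p).support).Nonempty := by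
      obtain ⟨y, hy⟩ := support_nonempty.mpr hne
      rw [← hsum] at hy
      exact ⟨y, Finset.mem_union.mpr (by
        rcases Finset.mem_union.mp (support_add hy) with h1 | h1
        · exact Or.inl h1
        · exact Or.inr h1)⟩
    obtain ⟨u₂, hu₂, humax₂⟩ := Finset.exists_max_image _ m.toSyn hunion
    have hlt : m.toSyn u₂ < s := by
      have h1 : m.toSyn u₂ < m.toSyn u := by
        rcases Finset.mem_union.mp hu₂ with h1 | h1
        · exact hstepf u₂ h1
        · exact hstepg u₂ h1
      have h2 : m.toSyn u ≤ s := by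
        rcases Finset.mem_union.mp hu with h1 | h1
        · exact hbf u h1
        · exact hbg u h1
      exact lt_of_lt_of_le h1 h2
    exact IH _ hlt (f - c • p) (g + c • p) d hf2I hg2J (by rw [hsum]; exact hlead)
      (fun x hx => humax₂ x (Finset.mem_union_left _ hx))
      (fun x hx => humax₂ x (Finset.mem_union_right _ hx))

lemma dir2 {I J : Ideal (MvPolynomial σ K)}
    (H : initialIdeal m (I ⊓ J) = initialIdeal m I ⊓ initialIdeal m J) :
    initialIdeal m (I + J) = initialIdeal m I + initialIdeal m J := by
  classical
  refine le_antisymm ?_ ?_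
  · rw [initialIdeal_eq, Ideal.span_le]
    rintro _ ⟨e, ⟨h, hhIJ, hlh⟩, rfl⟩
    have hhIJ' : h ∈ I ⊔ J := by rwa [← Ideal.add_eq_sup]
    obtain ⟨f, hfI, g, hgJ, hfg⟩ := Submodule.mem_sup.mp hhIJ'
    have hlead : IsLead m (f + g) e := by rw [hfg]; exact hlh
    exact key2 m H ((f.support ∪ g.support).sup m.toSyn) f g e hfI hgJ hlead
      (fun x hx => Finset.le_sup (Finset.mem_union_left _ hx))
      (fun x hx => Finset.le_sup (Finset.mem_union_right _ hx))
  · rw [Ideal.add_eq_sup, Ideal.add_eq_sup]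
    exact sup_le (initialIdeal_mono m le_sup_left) (initialIdeal_mono m le_sup_right)

end Stmt10Aux
end

theorem stmt10 (K : Type) [Field K] (r : ℕ) (m : MonomialOrder (Fin r))
    (I J : Ideal (MvPolynomial (Fin r) K))
    (hI : ∃ T : Set (MvPolynomial (Fin r) K),
      (∀ f ∈ T, ∃ d : ℕ, f.IsHomogeneous d) ∧ Ideal.span T = I)
    (hJ : ∃ T : Set (MvPolynomial (Fin r) K),
      (∀ f ∈ T, ∃ d : ℕ, f.IsHomogeneous d) ∧ Ideal.span T = J) :
    initialIdeal m (I + J) = initialIdeal m I + initialIdeal m J ↔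
      initialIdeal m (I ⊓ J) = initialIdeal m I ⊓ initialIdeal m J := by
  exact ⟨fun h => Stmt10Aux.dir1 m h, fun h => Stmt10Aux.dir2 m h⟩
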